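/- Soundness of ADL with respect to the WFS: Let D = ⟨R, C, ∅⟩ be a defeasible theory such that R_u = ∅ and C[p] is finite for each p ∈ Lit(D), and let Π be the logic program translation of D. Then for every p ∈ Lit(D): (1) if D ⊨_ADL p then Π ⊨_WFS p, and (2) if D ⊣_ADL p then Π ⊣_WFS p. -/

import Mathlib

namespace DLWFS

universe u

/-- Ground literals over a type `A` of atoms: atoms and their classical complements. -/
inductive Lit (A : Type u) : Type u where
  | pos : A → Lit A
  | neg : A → Lit A

/-- The classical complement `p̄` of a literal `p`. -/
def Lit.compl {A : Type u} : Lit A → Lit A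
  | .pos a => .neg a
  | .neg a => .pos a

/-- The three kinds of rules of a defeasible theory. -/
inductive RuleKind : Type where
  | strict
  | defeasible
  | defeater
deriving DecidableEq

/-- A rule of a defeasible theory: a kind, a body (a set of literals) and a head literal. -/
structure DRule (A : Type u) where
  kind : RuleKind
  body : Set (Lit A)
  head : Lit A

/-- A defeasible theory `D = ⟨R, C, ≺⟩`. -/
structure DTheory (A : Type u) where
  rules : Set (DRule A)
  conflicts : Set (Set (Lit A))
  prec : DRule A → DRule A → Prop

namespace DTheory

variable {A : Type u}

/-- The strict rules `R_s`. -/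
def Rs (D : DTheory A) : Set (DRule A) := {r ∈ D.rules | r.kind = RuleKind.strict}

/-- The defeasible rules `R_d`. -/
def Rd (D : DTheory A) : Set (DRule A) := {r ∈ D.rules | r.kind = RuleKind.defeasible}

/-- The defeater rules `R_u`. -/
def Ru (D : DTheory A) : Set (DRule A) := {r ∈ D.rules | r.kind = RuleKind.defeater}

/-- `C[p]`: the conflict sets containing literal `p`. -/
def Cset (D : DTheory A) (p : Lit A) : Set (Set (Lit A)) := {c ∈ D.conflicts | p ∈ c}

/-- Structural conditions in the definition of a defeasible theory: a countable set of
rules with finite bodies, a countable set of finite conflict sets containing every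
minimal conflict set `{p, ¬p}`, and an acyclic priority relation over non-strict rules. -/
def WellFormed (D : DTheory A) : Prop :=
  D.rules.Countable ∧ D.conflicts.Countable ∧
  (∀ r ∈ D.rules, r.body.Finite) ∧
  (∀ c ∈ D.conflicts, c.Finite) ∧
  (∀ p : A, ({Lit.pos p, Lit.neg p} : Set (Lit A)) ∈ D.conflicts) ∧
  (∀ r s, D.prec r s → r.kind ≠ RuleKind.strict ∧ s.kind ≠ RuleKind.strict) ∧
  (∀ r, ¬ Relation.TransGen D.prec r r)

/-- `C = C_MIN`: the conflict sets are exactly the minimal ones `{p, ¬p}`. -/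
def MinimalConflicts (D : DTheory A) : Prop :=
  D.conflicts = {c | ∃ p : A, c = ({Lit.pos p, Lit.neg p} : Set (Lit A))}

end DTheory

/-- A 3-valued interpretation: a pair `⟨T, F⟩` of sets. -/
abbrev Interp (L : Type u) : Type u := Set L × Set L

variable {A : Type u}

/-- `S` is ADL-unfounded with respect to theory `D` and interpretation `I = ⟨T, F⟩`. -/
def ADLUnfounded (D : DTheory A) (I : Interp (Lit A)) (S : Set (Lit A)) : Prop :=
  ∀ p ∈ S,
    (∀ r ∈ D.Rs, r.head = p → (r.body ∩ (I.2 ∪ S)).Nonempty) ∧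
    (∀ r ∈ D.Rd, r.head = p →
      (r.body ∩ (I.2 ∪ S)).Nonempty ∨
      ∃ c ∈ D.conflicts, p ∈ c ∧
        ∀ q ∈ c \ {p}, ∃ s ∈ D.rules, s.head = q ∧ s.body ⊆ I.1 ∧
          (D.prec r s ∨ s.kind = RuleKind.strict))

/-- `S` is NDL-unfounded with respect to theory `D` and interpretation `I = ⟨T, F⟩`. -/
def NDLUnfounded (D : DTheory A) (I : Interp (Lit A)) (S : Set (Lit A)) : Prop :=
  ∀ p ∈ S,
    (∀ r ∈ D.Rs, r.head = p → (r.body ∩ (I.2 ∪ S)).Nonempty) ∧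
    (∀ r ∈ D.Rd, r.head = p →
      (r.body ∩ (I.2 ∪ S)).Nonempty ∨
      ∃ c ∈ D.conflicts, p ∈ c ∧
        ∀ q ∈ c \ {p}, ∃ s ∈ D.rules, s.head = q ∧ s.body ⊆ I.1 ∧
          ¬ D.prec s r)

/-- `U_D(I)` for ADL: the union of all ADL-unfounded sets. -/
def UA (D : DTheory A) (I : Interp (Lit A)) : Set (Lit A) :=
  ⋃₀ {S | ADLUnfounded D I S}

/-- `U_D(I)` for NDL: the union of all NDL-unfounded sets. -/
def UN (D : DTheory A) (I : Interp (Lit A)) : Set (Lit A) :=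
  ⋃₀ {S | NDLUnfounded D I S}

/-- `T_D(I)`: the literals having a witness of provability with respect to `I = ⟨T, F⟩`. -/
def TD (D : DTheory A) (I : Interp (Lit A)) : Set (Lit A) :=
  {p | ∃ r ∈ D.rules, r.head = p ∧ r.body ⊆ I.1 ∧
    (r.kind = RuleKind.strict ∨
      (r.kind = RuleKind.defeasible ∧
        ∀ c ∈ D.conflicts, p ∈ c →
          ∃ q ∈ c \ {p}, ∀ s ∈ D.rules, s.head = q →
            (D.prec s r ∨ (s.body ∩ I.2).Nonempty)))}

/-- `W_D` for ADL. -/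
def WA (D : DTheory A) (I : Interp (Lit A)) : Interp (Lit A) := (TD D I, UA D I)

/-- `W_D` for NDL. -/
def WN (D : DTheory A) (I : Interp (Lit A)) : Interp (Lit A) := (TD D I, UN D I)

/-- `I` is the well-founded model for the operator `W`: the least fixpoint of `W`
(componentwise order). -/
def IsWFModel {L : Type u} (W : Interp L → Interp L) (I : Interp L) : Prop :=
  W I = I ∧ ∀ J, W J = J → I.1 ⊆ J.1 ∧ I.2 ⊆ J.2

/-- A rule of a normal logic program: `head ← pos, ∼neg`. -/
structure NRule (A : Type u) where
  head : A
  pos : Set A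
  neg : Set A

/-- A normal logic program: a set of rules. -/
abbrev NProgram (A : Type u) : Type u := Set (NRule A)

/-- Structural conditions in the definition of a normal logic program: a countable
set of ground rules with finite bodies. -/
def NProgram.WellFormed (P : NProgram A) : Prop :=
  P.Countable ∧ ∀ r ∈ P, r.pos.Finite ∧ r.neg.Finite

/-- The immediate consequence operator `T_Π` on 3-valued interpretations. -/
def TP (P : NProgram A) (I : Interp A) : Set A :=
  {a | ∃ r ∈ P, r.head = a ∧ r.pos ⊆ I.1 ∧ r.neg ⊆ I.2}

/-- `S` is an unfounded set of program `P` with respect to interpretation `I = ⟨T, F⟩`. -/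
def PUnfounded (P : NProgram A) (I : Interp A) (S : Set A) : Prop :=
  ∀ p ∈ S, ∀ r ∈ P, r.head = p →
    (r.pos ∩ (I.2 ∪ S)).Nonempty ∨ (r.neg ∩ I.1).Nonempty

/-- `U_Π(I)`: the greatest unfounded set (union of all unfounded sets). -/
def UP (P : NProgram A) (I : Interp A) : Set A :=
  ⋃₀ {S | PUnfounded P I S}

/-- `W_Π(I) = ⟨T_Π(I), U_Π(I)⟩`. -/
def WP (P : NProgram A) (I : Interp A) : Interp A := (TP P I, UP P I)

/-- Transfinite iteration of an operator `W` from `⊥`, taking suprema at limit ordinals. -/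
noncomputable def iterW {α : Type*} [CompleteLattice α] (W : α → α) : Ordinal.{0} → α :=
  fun o =>
    Ordinal.limitRecOn (motive := fun _ => α) o ⊥ (fun _ ih => W ih)
      (fun o' _ ih => ⨆ x : Set.Iio o', ih x.1 x.2)

/-- One step of the immediate consequence operator for a set of defeasible-theory rules. -/
def TRstep (R : Set (DRule A)) (S : Set (Lit A)) : Set (Lit A) :=
  {p | ∃ r ∈ R, r.head = p ∧ r.body ⊆ S}

/-- The finite iterates `T_R ↑ n`. -/
def TRiter (R : Set (DRule A)) : ℕ → Set (Lit A)
  | 0 => ∅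
  | n + 1 => TRstep R (TRiter R n)

/-- `Cl(R) = T_R ↑ ω`. -/
def ClR (R : Set (DRule A)) : Set (Lit A) := ⋃ n, TRiter R n

/-- The `α`-reduct `D_α^S` of a defeasible theory. -/
def alphaReduct (D : DTheory A) (S : Set (Lit A)) : Set (DRule A) :=
  D.Rs ∪ {r ∈ D.Rd | ∀ c ∈ D.conflicts, r.head ∈ c → ∃ q ∈ c \ {r.head}, q ∉ S}

/-- The ambiguity-propagating operator `α_D(S) = Cl(D_α^S)`. -/
def alphaOp (D : DTheory A) (S : Set (Lit A)) : Set (Lit A) := ClR (alphaReduct D S)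

/-- The `β`-reduct `D_β^S` of a defeasible theory. -/
def betaReduct (D : DTheory A) (S : Set (Lit A)) : Set (DRule A) :=
  D.Rs ∪ {r ∈ D.Rd | ∀ c ∈ D.conflicts, r.head ∈ c →
    ∃ q ∈ c \ {r.head}, ∀ s ∈ D.rules, s.head = q → (¬ s.body ⊆ S ∨ D.prec s r)}

/-- The ambiguity-blocking operator `β_D(S) = Cl(D_β^S)`. -/
def betaOp (D : DTheory A) (S : Set (Lit A)) : Set (Lit A) := ClR (betaReduct D S)

/-- `S` is an `α`-stable set of `D`. -/
def AlphaStable (D : DTheory A) (S : Set (Lit A)) : Prop := alphaOp D S = S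

/-- `S` is a `β`-stable set of `D`. -/
def BetaStable (D : DTheory A) (S : Set (Lit A)) : Prop := betaOp D S = S

/-- The sequence `X_D↑λ`: `X↑0 = ∅`, `X↑(λ+1) = β_D(β_D(X↑λ))`, unions at limits. -/
noncomputable def Xseq (D : DTheory A) : Ordinal.{0} → Set (Lit A) :=
  iterW (fun S => betaOp D (betaOp D S))

/-- The Gelfond–Lifschitz reduct `Π^S`. -/
def glReduct (P : NProgram A) (S : Set A) : NProgram A :=
  {r' | ∃ r ∈ P, r.neg ∩ S = ∅ ∧ r' = NRule.mk r.head r.pos ∅}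

/-- One step of the immediate consequence operator for a NAF-free program. -/
def TPstep (P : NProgram A) (S : Set A) : Set A :=
  {a | ∃ r ∈ P, r.head = a ∧ r.pos ⊆ S}

/-- The finite iterates `T_Π ↑ n` of a NAF-free program. -/
def TPiter (P : NProgram A) : ℕ → Set A
  | 0 => ∅
  | n + 1 => TPstep P (TPiter P n)

/-- `Cl(Π) = T_Π ↑ ω`. -/
def ClP (P : NProgram A) : Set A := ⋃ n, TPiter P n

/-- The Gelfond–Lifschitz operator `γ_Π(S) = Cl(Π^S)`. -/
def gamma (P : NProgram A) (S : Set A) : Set A := ClP (glReduct P S)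

/-- `S` is a stable model of `P`. -/
def StableModel (P : NProgram A) (S : Set A) : Prop := gamma P S = S

/-- `Prod(C[p])`: all sets obtained by choosing one literal other than `p` from each
conflict set containing `p`. -/
def ProdC (D : DTheory A) (p : Lit A) : Set (Set (Lit A)) :=
  {Q | ∃ f : Set (Lit A) → Lit A,
    (∀ c ∈ D.conflicts, p ∈ c → f c ∈ c \ {p}) ∧
    Q = f '' {c ∈ D.conflicts | p ∈ c}}

/-- The logic program translation `Π_D` of a defeasible theory `D` (negative literals
are treated as fresh atoms, so the atoms of the program are the literals of `D`). -/
def lpTrans (D : DTheory A) : NProgram (Lit A) :=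
  {r' | ∃ r ∈ D.Rs, r' = NRule.mk r.head r.body ∅} ∪
  {r' | ∃ r ∈ D.Rd, ∃ Q ∈ ProdC D r.head, r' = NRule.mk r.head r.body Q}

/-- The explicit version `Φ` of a normal program `Π`: atoms of `Φ` are the literals
over the atoms of `Π` (`¬p` being a fresh atom). -/
def explicitVer (P : NProgram A) : NProgram (Lit A) :=
  {r' | ∃ r ∈ P, r' = NRule.mk (Lit.pos r.head) (Lit.pos '' r.pos ∪ Lit.neg '' r.neg) ∅} ∪
  {r' | ∃ p : A, r' = NRule.mk (Lit.neg p) ∅ {Lit.pos p}}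

/-- The minimal conflict sets over atom type `A`. -/
def CMin (A : Type u) : Set (Set (Lit A)) :=
  {c | ∃ p : A, c = ({Lit.pos p, Lit.neg p} : Set (Lit A))}

/-- The defeasible theory translation `D_Π` of a normal program `Π`: each program rule
becomes a strict rule (default literals `∼b` becoming negative literals `¬b`), and each
atom `p` yields a presumption `∅ ⇒ ¬p`; conflict sets are minimal and `≺` is empty. -/
def dtTrans (P : NProgram A) : DTheory A :=
  { rules :=
      {e | ∃ r ∈ P, e = DRule.mk RuleKind.strict
            (Lit.pos '' r.pos ∪ Lit.neg '' r.neg) (Lit.pos r.head)} ∪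
      {e | ∃ p : A, e = DRule.mk RuleKind.defeasible ∅ (Lit.neg p)}
    conflicts := CMin A
    prec := fun _ _ => False }

/-- `M^¬ = M ∪ {¬p : p ∉ M}`, atoms being identified with positive literals. -/
def negCompl (M : Set A) : Set (Lit A) :=
  Lit.pos '' M ∪ Lit.neg '' {p | p ∉ M}

end DLWFS

namespace DLWFS

/-- **Soundness of ADL wrt the WFS.** Let `D = ⟨R, C, ∅⟩` be a defeasible theory with
`R_u = ∅` and `C[p]` finite for each literal `p`, and let `Π` be its logic program
translation. For every literal `p`: if `D ⊨_ADL p` then `Π ⊨_WFS p`, and if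
`D ⊣_ADL p` then `Π ⊣_WFS p`. -/
theorem adl_sound_wrt_wfs {A : Type*} (D : DTheory A)
    (hwf : D.WellFormed)
    (hru : D.Ru = ∅)
    (hprec : ∀ r s, ¬ D.prec r s)
    (hfin : ∀ p : Lit A, (D.Cset p).Finite)
    (ID : Interp (Lit A)) (hID : IsWFModel (WA D) ID)
    (IP : Interp (Lit A)) (hIP : IsWFModel (WP (lpTrans D)) IP) :
    ∀ p : Lit A, (p ∈ ID.1 → p ∈ IP.1) ∧ (p ∈ ID.2 → p ∈ IP.2) := by
  classical
  obtain ⟨hIPfix, _⟩ := hIP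
  have hT : TP (lpTrans D) IP = IP.1 := congrArg Prod.fst hIPfix
  have hU : UP (lpTrans D) IP = IP.2 := congrArg Prod.snd hIPfix
  -- (a) TD D IP ⊆ IP.1
  have ha : TD D IP ⊆ IP.1 := by
    rw [← hT]
    intro p hp
    obtain ⟨r, hr, hhead, hbody, hcase⟩ := hp
    subst hhead
    rcases hcase with hstrict | ⟨hdef, hc⟩
    · exact ⟨NRule.mk r.head r.body ∅, Or.inl ⟨r, ⟨hr, hstrict⟩, rfl⟩, rfl, hbody,
        by simp⟩
    · set f : Set (Lit A) → Lit A := fun c =>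
        if h : c ∈ D.conflicts ∧ r.head ∈ c then (hc c h.1 h.2).choose else r.head
        with hf
      have hf1 : ∀ c ∈ D.conflicts, r.head ∈ c → f c ∈ c \ {r.head} := by
        intro c h1c h2c
        simp only [hf, dif_pos (And.intro h1c h2c)]
        exact (hc c h1c h2c).choose_spec.1
      have hf2 : ∀ c ∈ D.conflicts, r.head ∈ c →
          ∀ s ∈ D.rules, s.head = f c → (s.body ∩ IP.2).Nonempty := by
        intro c h1c h2c s hs hsh
        have h' := (hc c h1c h2c).choose_spec.2 s hs
          (by simpa [hf, dif_pos (And.intro h1c h2c)] using hsh)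
        rcases h' with h | h
        · exact absurd h (hprec s r)
        · exact h
      set Q : Set (Lit A) := f '' {c | c ∈ D.conflicts ∧ r.head ∈ c} with hQ
      have hQP : Q ∈ ProdC D r.head := ⟨f, hf1, rfl⟩
      have hQF : Q ⊆ IP.2 := by
        rw [← hU]
        rintro q ⟨c, ⟨h1c, h2c⟩, rfl⟩
        refine ⟨{f c}, ?_, rfl⟩
        intro x hx r' hr' hh
        have hx' : x = f c := hx
        rcases hr' with ⟨s, ⟨hs, _⟩, rfl⟩ | ⟨s, ⟨hs, _⟩, Q', _, rfl⟩ <;>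
        · left
          have hne := hf2 c h1c h2c s hs (by rw [← hx']; exact hh)
          exact hne.mono (Set.inter_subset_inter_right _ Set.subset_union_left)
      exact ⟨NRule.mk r.head r.body Q, Or.inr ⟨r, ⟨hr, hdef⟩, Q, hQP, rfl⟩, rfl,
        hbody, hQF⟩
  -- (b) UA D IP ⊆ IP.2
  have hb : UA D IP ⊆ IP.2 := by
    rw [← hU]
    rintro p ⟨S, hS, hpS⟩
    refine ⟨S, ?_, hpS⟩
    intro x hx r' hr' hh
    obtain ⟨hstrict, hdef⟩ := hS x hx
    rcases hr' with ⟨s, hsRs, rfl⟩ | ⟨s, hsRd, Q, hQP, rfl⟩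
    · exact Or.inl (hstrict s hsRs hh)
    · rcases hdef s hsRd hh with h | ⟨c, hcC, hxc, hq⟩
      · exact Or.inl h
      · right
        obtain ⟨f, hf1, hfQ⟩ := hQP
        have hh' : s.head = x := hh
        have hxc' : s.head ∈ c := by rw [hh']; exact hxc
        have hfc : f c ∈ c \ {s.head} := hf1 c hcC hxc'
        have hfc' : f c ∈ c \ {x} := by rw [← hh']; exact hfc
        obtain ⟨t, ht, hth, htb, hts⟩ := hq (f c) hfc'
        have htstrict : t.kind = RuleKind.strict := by
          rcases hts with h | h
          · exact absurd h (hprec s t)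
          · exact h
        have hmem : f c ∈ TP (lpTrans D) IP :=
          ⟨NRule.mk t.head t.body ∅, Or.inl ⟨t, ⟨ht, htstrict⟩, rfl⟩, hth, htb,
            by simp⟩
        refine ⟨f c, ?_, hT ▸ hmem⟩
        rw [hfQ]
        exact ⟨c, ⟨hcC, hxc'⟩, rfl⟩
  -- WA is monotone
  have hmono : Monotone (WA D) := by
    intro I J hIJ
    obtain ⟨h1, h2⟩ := Prod.le_def.mp hIJ
    refine Prod.le_def.mpr ⟨?_, ?_⟩
    · intro p hp
      obtain ⟨r, hr, hhead, hbody, hcase⟩ := hp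
      refine ⟨r, hr, hhead, hbody.trans h1, ?_⟩
      rcases hcase with h | ⟨hk, hc⟩
      · exact Or.inl h
      · refine Or.inr ⟨hk, fun c hcC hpc => ?_⟩
        obtain ⟨q, hq, hall⟩ := hc c hcC hpc
        refine ⟨q, hq, fun s hs hsh => ?_⟩
        rcases hall s hs hsh with h | h
        · exact Or.inl h
        · exact Or.inr (h.mono (Set.inter_subset_inter_right _ h2))
    · intro p hp
      obtain ⟨S, hS, hpS⟩ := hp
      refine ⟨S, ?_, hpS⟩
      intro x hx
      obtain ⟨hstrict, hdef⟩ := hS x hx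
      refine ⟨fun r hr hrh => (hstrict r hr hrh).mono
        (Set.inter_subset_inter_right _ (Set.union_subset_union_left _ h2)), ?_⟩
      intro r hr hrh
      rcases hdef r hr hrh with h | ⟨c, hcC, hxc, hq⟩
      · exact Or.inl (h.mono
          (Set.inter_subset_inter_right _ (Set.union_subset_union_left _ h2)))
      · refine Or.inr ⟨c, hcC, hxc, fun q hqc => ?_⟩
        obtain ⟨s, hs, hsh, hsb, hps⟩ := hq q hqc
        exact ⟨s, hs, hsh, hsb.trans h1, hps⟩
  -- conclude via the Knaster–Tarski least fixpoint
  let Wh : Interp (Lit A) →o Interp (Lit A) := ⟨WA D, hmono⟩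
  have hfix : WA D (OrderHom.lfp Wh) = OrderHom.lfp Wh := Wh.map_lfp
  have hle1 := hID.2 (OrderHom.lfp Wh) hfix
  have hpre : WA D IP ≤ IP := Prod.le_def.mpr ⟨ha, hb⟩
  have hle2 : OrderHom.lfp Wh ≤ IP := OrderHom.lfp_le Wh hpre
  have hle2' := Prod.le_def.mp hle2
  intro p
  exact ⟨fun h => hle2'.1 (hle1.1 h), fun h => hle2'.2 (hle1.2 h)⟩

end DLWFS
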